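/- arXiv:0810.4796 — 2 statements merged into one kernel-verified Lean document; each statement's English description precedes it below -/
import Mathlib

section
/- In a nice willow graph D, every out-branching of D with the maximum number of leaves is rooted at the top vertex p_n of the stem. -/
universe u

variable {V : Type u}

/-- `T` is an out-tree of the digraph `D` rooted at `r` spanning the vertex set `S`:
an oriented tree with all arcs directed away from the unique root `r`. -/
structure IsOutTreeOn (D : V → V → Prop) (r : V) (S : Set V) (T : V → V → Prop) : Prop where
  sub : ∀ u v, T u v → D u v
  mem_left : ∀ u v, T u v → u ∈ S
  mem_right : ∀ u v, T u v → v ∈ S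
  root_mem : r ∈ S
  no_in_root : ∀ u, ¬ T u r
  unique_parent : ∀ v ∈ S, v ≠ r → ∃! u, T u v
  reach : ∀ v ∈ S, Relation.ReflTransGen T r v

/-- An out-branching of `D` rooted at `r`: a spanning out-tree. -/
def IsOutBranching (D : V → V → Prop) (r : V) (T : V → V → Prop) : Prop :=
  IsOutTreeOn D r Set.univ T

/-- The leaves of an out-tree `T` on vertex set `S`: vertices of out-degree 0. -/
def treeLeaves (T : V → V → Prop) (S : Set V) : Set V :=
  {v ∈ S | ∀ w, ¬ T v w}

def HasOutBranchingWithLeaves (D : V → V → Prop) (r : V) (k : ℕ) : Prop :=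
  ∃ T : V → V → Prop, IsOutBranching D r T ∧ k ≤ (treeLeaves T Set.univ).ncard

def HasOutBranchingOnWithLeaves (D : V → V → Prop) (r : V) (S : Set V) (k : ℕ) : Prop :=
  ∃ T : V → V → Prop, IsOutTreeOn D r S T ∧ k ≤ (treeLeaves T S).ncard

def HasOutTreeWithLeaves (D : V → V → Prop) (k : ℕ) : Prop :=
  ∃ (r : V) (S : Set V) (T : V → V → Prop),
    IsOutTreeOn D r S T ∧ k ≤ (treeLeaves T S).ncard

/-- A (directed) walk in `D` from `a` to `b`, given by its list of vertices. -/
def IsWalk (D : V → V → Prop) (a b : V) (q : List V) : Prop :=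
  q ≠ [] ∧ q.head? = some a ∧ q.getLast? = some b ∧ q.Chain' D

/-- The vertex `u` disconnects `v` from the root `r`:
every directed path from `r` to `v` contains `u`. -/
def VertexDisconnects (D : V → V → Prop) (r u v : V) : Prop :=
  u ≠ v ∧ ∀ q : List V, IsWalk D r v q → u ∈ q

/-- The vertex set `S` disconnects `v` from the root `r`. -/
def SetDisconnects (D : V → V → Prop) (r : V) (S : Set V) (v : V) : Prop :=
  v ∉ S ∧ ∀ q : List V, IsWalk D r v q → ∃ x ∈ S, x ∈ q

/-- The arc `(u, v)` disconnects `w` from the root `r`: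
every directed path from `r` to `w` uses the arc `(u, v)`. -/
def ArcDisconnects (D : V → V → Prop) (r u v w : V) : Prop :=
  ∀ q : List V, IsWalk D r w q → (u, v) ∈ q.zip q.tail

/-- A BFS tree of `D` rooted at `r`: an out-branching together with a level (depth)
function such that `D` has no forward arcs. -/
structure IsBFSTree (D : V → V → Prop) (r : V) (T : V → V → Prop) (depth : V → ℕ) : Prop where
  branching : IsOutBranching D r T
  level : ∀ u v, T u v → depth v = depth u + 1
  root_level : depth r = 0
  no_forward : ∀ u v, D u v → depth v ≤ depth u + 1

/-- Contraction of the arc `(u, v)`: the new vertex is identified with `u`,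
and `v` is removed. -/
def contractArc (D : V → V → Prop) (u v : V) : V → V → Prop :=
  fun a b => a ≠ v ∧ b ≠ v ∧ a ≠ b ∧
    (D a b ∨ (a = u ∧ D v b) ∨ (b = u ∧ D a v))

/-- Reduction Rule 5 (two directional path rule) is applicable to `D`. -/
def Rule5Applicable (D : V → V → Prop) : Prop :=
  ∃ l : ℕ, (l = 7 ∨ l = 8) ∧
    ∃ pp : ℕ → V, Set.InjOn pp (Set.Iio l) ∧
      (∀ i, i + 1 < l → D (pp i) (pp (i + 1))) ∧
      ∃ pin ∈ ({pp (l - 2), pp (l - 1)} : Set V),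
        ∃ pout ∈ ({pp 0, pp 1} : Set V),
          (∀ v ∈ pp '' Set.Iio l, (∃ u, u ∉ pp '' Set.Iio l ∧ D u v) → v = pp 0 ∨ v = pin) ∧
          (∀ v ∈ pp '' Set.Iio l, (∃ u, u ∉ pp '' Set.Iio l ∧ D v u) → v = pp (l - 1) ∨ v = pout) ∧
          IsOutTreeOn D (pp 0) (pp '' Set.Iio l)
            (fun a b => ∃ i, i + 1 < l ∧ a = pp i ∧ b = pp (i + 1)) ∧
          (∀ T : V → V → Prop, IsOutTreeOn D (pp 0) (pp '' Set.Iio l) T →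
            T = fun a b => ∃ i, i + 1 < l ∧ a = pp i ∧ b = pp (i + 1)) ∧
          ∃ Q : V → V → Prop,
            IsOutTreeOn D pin (pp '' Set.Iio l) Q ∧
            (∀ v, {w | Q v w}.ncard ≤ 1) ∧
            (∀ T : V → V → Prop, IsOutTreeOn D pin (pp '' Set.Iio l) T → T = Q) ∧
            (∀ i, i + 1 < l → pout = pp i → ∀ bq, Q (pp (l - 1)) bq → pp (i + 1) ≠ bq)

/-- `D` with root `r` is reduced: none of the five reduction rules applies. -/
structure Reduced (D : V → V → Prop) (r : V) : Prop where
  reach : ∀ v, Relation.ReflTransGen D r v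
  rule2 : ∀ u v, VertexDisconnects D r u v → ¬ D v u
  rule3 : ∀ u v w₁ w₂, D u v → w₁ ≠ w₂ →
    ArcDisconnects D r u v w₁ → ArcDisconnects D r u v w₂ → False
  rule4 : ∀ (S : Set V) (v w : V), S.ncard ≤ 2 → SetDisconnects D r S v →
    (∀ x ∈ S, D x w) → ¬ D v w
  rule5 : ¬ Rule5Applicable D

/-- A nice forest `F` of the path `p 0, p 1, …, p l`, a spanning subforest of
`D[V(P)]` consisting of out-trees rooted at the vertices of `S`. -/
def NiceForest (D : V → V → Prop) (l : ℕ) (p : ℕ → V) (S : Set V)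
    (F : V → V → Prop) : Prop :=
  (∀ u v, F u v → D u v ∧ u ∈ p '' Set.Iic l ∧ v ∈ p '' Set.Iic l) ∧
  (∀ s ∈ S, ∀ u, ¬ F u s) ∧
  (∀ v ∈ p '' Set.Iic l, v ∉ S → ∃! u, F u v) ∧
  (∀ v ∈ p '' Set.Iic l, ∃ s ∈ S, Relation.ReflTransGen F s v) ∧
  (∀ i j, i ≤ l → j ≤ l → i < j → F (p i) (p j) →
    2 ≤ {w | F (p i) w}.ncard ∨ {u | D u (p j)}.ncard = 1) ∧
  (∀ i j, i ≤ l → j ≤ l → j < i → F (p i) (p j) → ∀ q, i < q → q ≤ l → ¬ D (p q) (p j))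

/-- The key vertices of a nice forest `F`: the roots `S`, the leaves of `F`,
the vertices of out-degree at least 2 in `F`, and their children. -/
def keyVertices (l : ℕ) (p : ℕ → V) (S : Set V) (F : V → V → Prop) : Set V :=
  S ∪ treeLeaves F (p '' Set.Iic l) ∪ {v | 2 ≤ {w | F v w}.ncard} ∪
    {v | ∃ u, F u v ∧ 2 ≤ {w | F u w}.ncard}

/-- A nice willow graph with stem `p 0, p 1, …, p (n-1)` (bottom `p 0`, top `p (n-1)`)
and backward-arc set `A2`. -/
structure IsNiceWillow (A2 : V → V → Prop) (n : ℕ) (p : ℕ → V) : Prop where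
  three_le : 3 ≤ n
  inj : Set.InjOn p (Set.Iio n)
  surj : ∀ v, ∃ i < n, p i = v
  backward : ∀ u v, A2 u v → ∃ i j, i < n ∧ j < i ∧ u = p i ∧ v = p j
  unique_source : ∀ i, i + 1 < n → ∃ u, A2 u (p i)
  top_arc1 : A2 (p (n - 1)) (p (n - 2))
  top_arc2 : A2 (p (n - 1)) (p (n - 3))
  only1 : ∀ u v, A2 u v → (u = p (n - 2) ∨ v = p (n - 2)) →
    u = p (n - 1) ∧ v = p (n - 2)
  only2 : ∀ u v, A2 u v → (u = p (n - 3) ∨ v = p (n - 3)) →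
    u = p (n - 1) ∧ v = p (n - 3)
  branch : ∃ T : V → V → Prop, IsOutBranching A2 (p (n - 1)) T

/-- The digraph of a willow: the stem arcs together with the backward arcs `A2`. -/
def willowD (A2 : V → V → Prop) (n : ℕ) (p : ℕ → V) : V → V → Prop :=
  fun a b => (∃ i, i + 1 < n ∧ a = p i ∧ b = p (i + 1)) ∨ A2 a b

/-- Disjoint union of a family of digraphs. -/
def sigmaUnion {ι : Type*} {Vv : ι → Type*} (W : ∀ i, Vv i → Vv i → Prop) :
    (Σ i, Vv i) → (Σ i, Vv i) → Prop :=
  fun x y => ∃ h : y.1 = x.1, W x.1 x.2 (cast (congrArg Vv h) y.2)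

/-- Vertices of the digraph constructed from a Set Cover instance. -/
inductive SCVert (m n : ℕ) : Type
  | root : SCVert m n
  | pv : SCVert m n
  | pv' : SCVert m n
  | s : Fin m → SCVert m n
  | e : Fin n → SCVert m n

/-- Arcs of the digraph constructed from a Set Cover instance. -/
def scArcs (m n : ℕ) (Fam : Fin m → Set (Fin n)) : SCVert m n → SCVert m n → Prop
  | .root, .s _ => True
  | .root, .pv => True
  | .root, .pv' => True
  | .s i, .e j => j ∈ Fam i
  | .e a, .e c => (c : ℕ) + 1 = (a : ℕ)
  | .s a, .s c => (c : ℕ) + 1 = (a : ℕ)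
  | .e a, .s c => (a : ℕ) = 0 ∧ (c : ℕ) + 1 = m
  | .s a, .pv => (a : ℕ) = 0
  | .pv, .pv' => True
  | .pv', .root => True
  | _, _ => False

namespace Stmt16Aux


def reachN (T : V → V → Prop) : ℕ → V → V → Prop
  | 0 => fun a b => a = b
  | (m+1) => fun a b => ∃ c, T a c ∧ reachN T m c b

lemma reachN_zero {T : V → V → Prop} {a b : V} : reachN T 0 a b ↔ a = b := Iff.rfl

lemma reachN_succ {T : V → V → Prop} {m : ℕ} {a b : V} :
    reachN T (m+1) a b ↔ ∃ c, T a c ∧ reachN T m c b := Iff.rfl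

lemma reachN_snoc {T : V → V → Prop} :
    ∀ (m : ℕ) (a b : V), reachN T (m+1) a b ↔ ∃ c, reachN T m a c ∧ T c b := by
  intro m
  induction m with
  | zero =>
    intro a b
    constructor
    · rintro ⟨c, h, h0⟩
      rw [reachN_zero] at h0
      exact ⟨a, rfl, h0 ▸ h⟩
    · rintro ⟨c, h0, h⟩
      rw [reachN_zero] at h0
      exact ⟨b, h0 ▸ h, rfl⟩
  | succ m ih =>
    intro a b
    constructor
    · rintro ⟨c, hac, hc⟩
      obtain ⟨d, hd, hdb⟩ := (ih c b).mp hc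
      exact ⟨d, ⟨c, hac, hd⟩, hdb⟩
    · rintro ⟨c, ⟨d, had, hdc⟩, hcb⟩
      exact ⟨d, had, (ih d b).mpr ⟨c, hdc, hcb⟩⟩

lemma rtg_iff {T : V → V → Prop} {a b : V} :
    Relation.ReflTransGen T a b ↔ ∃ m, reachN T m a b := by
  constructor
  · intro h
    induction h with
    | refl => exact ⟨0, rfl⟩
    | tail _ hbc ih =>
      obtain ⟨m, hm⟩ := ih
      exact ⟨m+1, (reachN_snoc m a _).mpr ⟨_, hm, hbc⟩⟩
  · rintro ⟨m, hm⟩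
    induction m generalizing a with
    | zero => exact (reachN_zero.mp hm) ▸ Relation.ReflTransGen.refl
    | succ m ih =>
      obtain ⟨c, hac, h⟩ := hm
      exact Relation.ReflTransGen.head hac (ih h)

variable {D : V → V → Prop} {r : V} {T : V → V → Prop}

lemma parent_eq (hT : IsOutBranching D r T) {u v w : V} (h1 : T u v) (h2 : T w v) : u = w := by
  have hv : v ≠ r := fun h => hT.no_in_root u (h ▸ h1)
  obtain ⟨x, _, hx⟩ := hT.unique_parent v (Set.mem_univ v) hv
  rw [hx u h1, hx w h2]

lemma acyc (hT : IsOutBranching D r T) {u v : V} (h1 : T u v)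
    (h2 : Relation.ReflTransGen T v u) : False := by
  classical
  have hex : ∀ x : V, ∃ m, reachN T m r x := fun x => rtg_iff.mp (hT.reach x (Set.mem_univ x))
  let g : V → ℕ := fun x => Nat.find (hex x)
  have hg : ∀ x, reachN T (g x) r x := fun x => Nat.find_spec (hex x)
  have step : ∀ {x y : V}, T x y → g y = g x + 1 := by
    intro x y hxy
    have hyr : y ≠ r := fun h => hT.no_in_root x (h ▸ hxy)
    have h1' : g y ≠ 0 := by
      intro h0
      have h2' := hg y
      rw [h0, reachN_zero] at h2'
      exact hyr h2'.symm
    obtain ⟨m, hm⟩ := Nat.exists_eq_succ_of_ne_zero h1'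
    have h3 := hg y
    rw [hm] at h3
    obtain ⟨c, hc, hcy⟩ := (reachN_snoc m r y).mp h3
    have hcx : c = x := parent_eq hT hcy hxy
    have hxle : g x ≤ m := Nat.find_min' (hex x) (hcx ▸ hc)
    have hyle : g y ≤ g x + 1 := Nat.find_min' (hex y) ((reachN_snoc _ r y).mpr ⟨x, hg x, hxy⟩)
    omega
  have mono : ∀ {x y : V}, Relation.ReflTransGen T x y → g x ≤ g y := by
    intro x y h
    induction h with
    | refl => exact le_refl _
    | tail _ hxy ih => have := step hxy; omega
  have e1 := step h1
  have e2 := mono h2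
  omega

lemma root_internal (hT : IsOutBranching D r T) {v : V} (hv : v ≠ r) : ∃ w, T r w := by
  rcases (hT.reach v (Set.mem_univ v)).cases_head with h | ⟨c, hc, _⟩
  · exact absurd h.symm hv
  · exact ⟨c, hc⟩

/-- rewiring: all of `S` gets new parent `ρ`, `ρ` becomes root. -/
def rewire (T : V → V → Prop) (S : Set V) (ρ : V) : V → V → Prop :=
  fun x y => (y ∈ S ∧ x = ρ) ∨ (y ∉ S ∧ y ≠ ρ ∧ T x y)

lemma rewire_isBranching (hT : IsOutBranching D r T) {S : Set V} {ρ : V}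
    (hρ : ρ ∉ S) (hr : r ∈ S ∨ r = ρ) (harc : ∀ y ∈ S, D ρ y) :
    IsOutBranching D ρ (rewire T S ρ) := by
  classical
  refine ⟨?_, fun _ _ _ => Set.mem_univ _, fun _ _ _ => Set.mem_univ _, Set.mem_univ _,
    ?_, ?_, ?_⟩
  · rintro u v (⟨hvS, rfl⟩ | ⟨_, _, h⟩)
    · exact harc v hvS
    · exact hT.sub u v h
  · rintro u (⟨hS, _⟩ | ⟨_, hne, _⟩)
    · exact hρ hS
    · exact hne rfl
  · intro v _ hvρ
    by_cases hvS : v ∈ S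
    · refine ⟨ρ, Or.inl ⟨hvS, rfl⟩, ?_⟩
      rintro y (⟨_, rfl⟩ | ⟨h, _, _⟩)
      · rfl
      · exact absurd hvS h
    · have hvr : v ≠ r := by
        rintro rfl
        rcases hr with h | h
        · exact hvS h
        · exact hvρ h
      obtain ⟨u, hu, huniq⟩ := hT.unique_parent v (Set.mem_univ v) hvr
      refine ⟨u, Or.inr ⟨hvS, hvρ, hu⟩, ?_⟩
      rintro y (⟨hS, _⟩ | ⟨_, _, h⟩)
      · exact absurd hS hvS
      · exact huniq y h
  · intro v _
    obtain ⟨m, hm⟩ := rtg_iff.mp (hT.reach v (Set.mem_univ v))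
    clear hm
    have key : ∀ m v, reachN T m r v → Relation.ReflTransGen (rewire T S ρ) ρ v := by
      intro m
      induction m using Nat.strong_induction_on with
      | _ m ih =>
        intro v hv
        by_cases hvρ : v = ρ
        · exact hvρ ▸ Relation.ReflTransGen.refl
        by_cases hvS : v ∈ S
        · exact Relation.ReflTransGen.single (Or.inl ⟨hvS, rfl⟩)
        · have hvr : v ≠ r := by
            rintro rfl
            rcases hr with h | h
            · exact hvS h
            · exact hvρ h
          cases m with
          | zero => exact absurd (reachN_zero.mp hv).symm hvr
          | succ m =>
            obtain ⟨c, hc, hcv⟩ := (reachN_snoc m r v).mp hv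
            exact (ih m (Nat.lt_succ_self m) c hc).tail (Or.inr ⟨hvS, hvρ, hcv⟩)
    obtain ⟨m, hm⟩ := rtg_iff.mp (hT.reach v (Set.mem_univ v))
    exact key m v hm

lemma mem_treeLeaves {T : V → V → Prop} {v : V} :
    v ∈ treeLeaves T Set.univ ↔ ∀ w, ¬ T v w := by
  simp [treeLeaves]

lemma rewire_leaf_keep {S : Set V} {ρ v : V} (hvρ : v ≠ ρ) (hleaf : ∀ w, ¬ T v w) :
    ∀ w, ¬ rewire T S ρ v w := by
  rintro w (⟨_, rfl⟩ | ⟨_, _, h⟩)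
  · exact hvρ rfl
  · exact hleaf w h

lemma rewire_leaf_new {S : Set V} {ρ y : V} (hyS : y ∈ S) (hρ : ρ ∉ S)
    (hout : ∀ w, T y w → w ∈ S ∨ w = ρ) : ∀ w, ¬ rewire T S ρ y w := by
  rintro w (⟨_, rfl⟩ | ⟨hwS, hwρ, h⟩)
  · exact hρ hyS
  · rcases hout w h with h' | h'
    · exact hwS h'
    · exact hwρ h'



lemma count_two [Finite V] {L L' : Set V} {a b t : V} (hsub : insert a (insert b (L \ {t})) ⊆ L')
    (hab : a ≠ b) (ha : a ∉ L) (hb : b ∉ L) : L.ncard + 1 ≤ L'.ncard := by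
  have h1 : L.ncard ≤ (L \ {t}).ncard + 1 := by
    have : L ⊆ insert t (L \ {t}) := by
      intro x hx
      by_cases hxt : x = t
      · exact hxt ▸ Set.mem_insert _ _
      · exact Set.mem_insert_of_mem _ ⟨hx, hxt⟩
    calc L.ncard ≤ (insert t (L \ {t})).ncard := Set.ncard_le_ncard this (Set.toFinite _)
    _ ≤ (L \ {t}).ncard + 1 := Set.ncard_insert_le _ _
  have h2 : (insert a (insert b (L \ {t}))).ncard = (L \ {t}).ncard + 2 := by
    have hb' : b ∉ L \ {t} := fun hx => hb hx.1
    have ha' : a ∉ insert b (L \ {t}) := by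
      rintro (h | h)
      · exact hab h
      · exact ha h.1
    rw [Set.ncard_insert_of_notMem ha' (Set.toFinite _),
        Set.ncard_insert_of_notMem hb' (Set.toFinite _)]
  have h3 : (insert a (insert b (L \ {t}))).ncard ≤ L'.ncard :=
    Set.ncard_le_ncard hsub (Set.toFinite _)
  omega

lemma count_one [Finite V] {L L' : Set V} {a : V} (hsub : insert a L ⊆ L')
    (ha : a ∉ L) : L.ncard + 1 ≤ L'.ncard := by
  have h2 : (insert a L).ncard = L.ncard + 1 := Set.ncard_insert_of_notMem ha (Set.toFinite _)
  have h3 : (insert a L).ncard ≤ L'.ncard := Set.ncard_le_ncard hsub (Set.toFinite _)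
  omega



variable {A2 : V → V → Prop} {n : ℕ} {p : ℕ → V}

lemma pinj (h : IsNiceWillow A2 n p) {i j : ℕ} (hi : i < n) (hj : j < n)
    (e : p i = p j) : i = j :=
  h.inj hi hj e

/-- arcs into the top `p (n-1)` come only from `p (n-2)` -/
lemma into_top (h : IsNiceWillow A2 n p) {u : V} (hu : willowD A2 n p u (p (n-1))) :
    u = p (n-2) := by
  have h3 := h.three_le
  rcases hu with ⟨i, hi, rfl, he⟩ | ha
  · have : n - 1 = i + 1 := pinj h (by omega) hi he
    have : i = n - 2 := by omega
    exact this ▸ rfl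
  · obtain ⟨i, j, hin, hji, _, hv⟩ := h.backward _ _ ha
    have : n - 1 = j := pinj h (by omega) (by omega) hv
    omega

/-- arcs into `p (n-2)` come only from `p (n-3)` or `p (n-1)` -/
lemma into_a (h : IsNiceWillow A2 n p) {u : V} (hu : willowD A2 n p u (p (n-2))) :
    u = p (n-3) ∨ u = p (n-1) := by
  have h3 := h.three_le
  rcases hu with ⟨i, hi, rfl, he⟩ | ha
  · have : n - 2 = i + 1 := pinj h (by omega) hi he
    have : i = n - 3 := by omega
    exact Or.inl (this ▸ rfl)
  · exact Or.inr (h.only1 _ _ ha (Or.inr rfl)).1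

/-- arcs into `p (n-3)` come only from `p (n-4)` or `p (n-1)` (when `n ≥ 4`) -/
lemma into_b (h : IsNiceWillow A2 n p) (h4 : 4 ≤ n) {u : V}
    (hu : willowD A2 n p u (p (n-3))) : u = p (n-4) ∨ u = p (n-1) := by
  rcases hu with ⟨i, hi, rfl, he⟩ | ha
  · have : n - 3 = i + 1 := pinj h (by omega) hi he
    have : i = n - 4 := by omega
    exact Or.inl (this ▸ rfl)
  · exact Or.inr (h.only2 _ _ ha (Or.inr rfl)).1

/-- arcs out of `p (n-2)` go only to `p (n-1)` -/
lemma out_a (h : IsNiceWillow A2 n p) {w : V} (hu : willowD A2 n p (p (n-2)) w) :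
    w = p (n-1) := by
  have h3 := h.three_le
  rcases hu with ⟨i, hi, he, rfl⟩ | ha
  · have : n - 2 = i := pinj h (by omega) (by omega) he
    have e2 : i + 1 = n - 1 := by omega
    rw [e2]
  · have := (h.only1 _ _ ha (Or.inl rfl)).1
    have : n - 2 = n - 1 := pinj h (by omega) (by omega) this
    omega

/-- arcs out of `p (n-3)` go only to `p (n-2)` -/
lemma out_b (h : IsNiceWillow A2 n p) {w : V} (hu : willowD A2 n p (p (n-3)) w) :
    w = p (n-2) := by
  have h3 := h.three_le
  rcases hu with ⟨i, hi, he, rfl⟩ | ha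
  · have : n - 3 = i := pinj h (by omega) (by omega) he
    have e2 : i + 1 = n - 2 := by omega
    rw [e2]
  · have := (h.only2 _ _ ha (Or.inl rfl)).1
    have : n - 3 = n - 1 := pinj h (by omega) (by omega) this
    omega

/-- arcs into a low vertex `p j`, `j + 4 ≤ n` -/
lemma into_low (h : IsNiceWillow A2 n p) {j : ℕ} (hj : j + 4 ≤ n) {u : V}
    (hu : willowD A2 n p u (p j)) :
    (0 < j ∧ u = p (j-1)) ∨
      (∃ k, j < k ∧ k < n ∧ k ≠ n-2 ∧ k ≠ n-3 ∧ A2 (p k) (p j) ∧ u = p k) := by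
  rcases hu with ⟨i, hi, rfl, he⟩ | ha
  · have : j = i + 1 := pinj h (by omega) hi he
    subst this  -- careful direction
    exact Or.inl ⟨by omega, by simp⟩
  · obtain ⟨i, j2, hin, hji, rfl, hv⟩ := h.backward _ _ ha
    have hj2 : j2 = j := pinj h (by omega) (by omega) hv.symm
    subst hj2
    refine Or.inr ⟨i, hji, hin, ?_, ?_, ha, rfl⟩
    · intro e
      have := (h.only1 _ _ ha (Or.inl (by rw [e]))).1
      have : i = n - 1 := pinj h (by omega) (by omega) this
      omega
    · intro e
      have := (h.only2 _ _ ha (Or.inl (by rw [e]))).1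
      have : i = n - 1 := pinj h (by omega) (by omega) this
      omega

/-- every non-top vertex has an A2 in-arc from a vertex that is not `p (n-2)`, `p (n-3)` -/
lemma a2_in_exists (h : IsNiceWillow A2 n p) {j : ℕ} (hj : j + 1 < n) :
    ∃ k, j < k ∧ k < n ∧ k ≠ n-2 ∧ k ≠ n-3 ∧ A2 (p k) (p j) := by
  obtain ⟨u, hu⟩ := h.unique_source j hj
  obtain ⟨i, j2, hin, hji, rfl, hv⟩ := h.backward _ _ hu
  have hj2 : j2 = j := pinj h (by omega) (by omega) hv.symm
  subst hj2
  refine ⟨i, hji, hin, ?_, ?_, hu⟩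
  · intro e
    have := (h.only1 _ _ hu (Or.inl (by rw [e]))).1
    have : i = n - 1 := pinj h (by omega) (by omega) this
    omega
  · intro e
    have := (h.only2 _ _ hu (Or.inl (by rw [e]))).1
    have : i = n - 1 := pinj h (by omega) (by omega) this
    omega


variable {A2 : V → V → Prop} {n : ℕ} {p : ℕ → V}

/-- In any out-branching rooted at `p i` with `i + 4 ≤ n`, all stem arcs above `i` are present. -/
lemma stem_chain (h : IsNiceWillow A2 n p) {i : ℕ} {T : V → V → Prop}
    (hT : IsOutBranching (willowD A2 n p) (p i) T) (hi : i + 4 ≤ n) :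
    ∀ j, i ≤ j → j + 2 ≤ n → T (p j) (p (j+1)) := by
  have key : ∀ m j, i ≤ j → j + 2 + m = n → T (p j) (p (j+1)) := by
    intro m
    induction m using Nat.strong_induction_on with
    | _ m ih =>
      intro j hij hjm
      -- climb: reach from p (j+1) up to p k along already-established stem arcs
      have climb : ∀ k, j+1 ≤ k → k + 1 ≤ n → Relation.ReflTransGen T (p (j+1)) (p k) := by
        intro k hk1
        induction k, hk1 using Nat.le_induction with
        | base => intro _; exact Relation.ReflTransGen.refl
        | succ k hk ihk =>
          intro hk2
          exact (ihk (by omega)).tail (ih (n - 2 - k) (by omega) k (by omega) (by omega))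
    -- who is the parent of p (j+1)?
      have hne : p (j+1) ≠ p i := by
        intro e
        have := pinj h (by omega) (by omega) e
        omega
      obtain ⟨u, hu, _⟩ := hT.unique_parent (p (j+1)) (Set.mem_univ _) hne
      have hD := hT.sub _ _ hu
      -- case on position of j+1
      rcases (by omega : m = 0 ∨ m = 1 ∨ m = 2 ∨ 3 ≤ m) with hm | hm | hm | hm
      · -- j + 1 = n - 1 : top vertex
        have e1 : j + 1 = n - 1 := by omega
        rw [e1] at hu hD ⊢
        have := into_top h hD
        subst this
        have e2 : n - 2 = j := by omega
        rw [e2] at hu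
        exact hu
      · -- j + 1 = n - 2
        have e1 : j + 1 = n - 2 := by omega
        rw [e1] at hu hD ⊢
        rcases into_a h hD with he | he
        · subst he
          have e2 : n - 3 = j := by omega
          rw [e2] at hu
          exact hu
        · subst he
          exact absurd hu (fun hu => acyc hT hu (by
            have := climb (n-1) (by omega) (by omega)
            rwa [e1] at this))
      · -- j + 1 = n - 3
        have e1 : j + 1 = n - 3 := by omega
        rw [e1] at hu hD ⊢
        rcases into_b h (by omega) hD with he | he
        · subst he
          have e2 : n - 4 = j := by omega
          rw [e2] at hu
          exact hu
        · subst he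
          exact absurd hu (fun hu => acyc hT hu (by
            have := climb (n-1) (by omega) (by omega)
            rwa [e1] at this))
      · -- j + 1 ≤ n - 4
        rcases into_low h (by omega) hD with ⟨_, he⟩ | ⟨k, hk1, hk2, _, _, _, he⟩
        · subst he
          have e2 : j + 1 - 1 = j := by omega
          rw [e2] at hu
          exact hu
        · subst he
          exact absurd hu (fun hu => acyc hT hu (climb k (by omega) (by omega)))
  intro j hij hj2
  exact key (n - 2 - j) j hij (by omega)


end Stmt16Aux

open Stmt16Aux

theorem stmt16 [Fintype V] (A2 : V → V → Prop) (n : ℕ) (p : ℕ → V)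
    (h : IsNiceWillow A2 n p)
    (root : V) (T : V → V → Prop)
    (hT : IsOutBranching (willowD A2 n p) root T)
    (hmax : ∀ (root' : V) (T' : V → V → Prop),
      IsOutBranching (willowD A2 n p) root' T' →
      (treeLeaves T' Set.univ).ncard ≤ (treeLeaves T Set.univ).ncard) :
    root = p (n - 1) := by
  classical
  obtain ⟨i, hi, rfl⟩ := h.surj root
  by_contra hne
  have h3 := h.three_le
  have hine : i ≠ n - 1 := fun e => hne (by rw [e])
  have hDta : willowD A2 n p (p (n-1)) (p (n-2)) := Or.inr h.top_arc1
  have hDtb : willowD A2 n p (p (n-1)) (p (n-3)) := Or.inr h.top_arc2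
  have hab : p (n-2) ≠ p (n-3) := fun e => by have := pinj h (by omega) (by omega) e; omega
  have hat : p (n-2) ≠ p (n-1) := fun e => by have := pinj h (by omega) (by omega) e; omega
  have hbt : p (n-3) ≠ p (n-1) := fun e => by have := pinj h (by omega) (by omega) e; omega
  rcases (by omega : i = n-2 ∨ i = n-3 ∨ i + 4 ≤ n) with hc | hc | hc
  · -- Case A : root = p (n-2)
    subst hc
    have t_child : ∃ x, T (p (n-1)) x := by
      rcases (hT.reach (p (n-3)) (Set.mem_univ _)).cases_head with e | ⟨w, hw, hwb⟩
      · exact absurd e hab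
      · have hwt : w = p (n-1) := out_a h (hT.sub _ _ hw)
        subst hwt
        rcases hwb.cases_head with e | ⟨x, hx, _⟩
        · exact absurd e (Ne.symm hbt)
        · exact ⟨x, hx⟩
    have t_not_leaf : p (n-1) ∉ treeLeaves T Set.univ := by
      obtain ⟨x, hx⟩ := t_child
      intro hl
      exact (mem_treeLeaves.mp hl) x hx
    have a_not_leaf : p (n-2) ∉ treeLeaves T Set.univ := by
      obtain ⟨w, hw⟩ := root_internal hT (Ne.symm hat)
      intro hl
      exact (mem_treeLeaves.mp hl) w hw
    have hρS : p (n-1) ∉ ({p (n-2), p (n-3)} : Set V) := by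
      intro hy
      simp only [Set.mem_insert_iff, Set.mem_singleton_iff] at hy
      rcases hy with e | e
      · exact hat e.symm
      · exact hbt e.symm
    have harc : ∀ y ∈ ({p (n-2), p (n-3)} : Set V), willowD A2 n p (p (n-1)) y := by
      intro y hy
      simp only [Set.mem_insert_iff, Set.mem_singleton_iff] at hy
      rcases hy with rfl | rfl
      · exact hDta
      · exact hDtb
    have hT' := rewire_isBranching hT hρS (Or.inl (by left; rfl)) harc
    have hsub : insert (p (n-2)) (treeLeaves T Set.univ) ⊆
        treeLeaves (rewire T {p (n-2), p (n-3)} (p (n-1))) Set.univ := by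
      intro v hv
      rw [Set.mem_insert_iff] at hv
      rw [mem_treeLeaves]
      rcases hv with rfl | hv
      · exact rewire_leaf_new (by left; rfl) hρS
          (fun w hw => Or.inr (out_a h (hT.sub _ _ hw)))
      · have hvt : v ≠ p (n-1) := fun e => t_not_leaf (e ▸ hv)
        exact rewire_leaf_keep hvt (mem_treeLeaves.mp hv)
    have hle := hmax (p (n-1)) _ hT'
    have hge := count_one hsub a_not_leaf
    omega
  · -- Case B : root = p (n-3)
    subst hc
    have a_not_leaf : p (n-2) ∉ treeLeaves T Set.univ := by
      obtain ⟨u, hu, _⟩ := hT.unique_parent (p (n-1)) (Set.mem_univ _) (Ne.symm hbt)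
      have : u = p (n-2) := into_top h (hT.sub _ _ hu)
      subst this
      intro hl
      exact (mem_treeLeaves.mp hl) _ hu
    have b_not_leaf : p (n-3) ∉ treeLeaves T Set.univ := by
      obtain ⟨w, hw⟩ := root_internal hT (Ne.symm hbt)
      intro hl
      exact (mem_treeLeaves.mp hl) w hw
    have hρS : p (n-1) ∉ ({p (n-2), p (n-3)} : Set V) := by
      intro hy
      simp only [Set.mem_insert_iff, Set.mem_singleton_iff] at hy
      rcases hy with e | e
      · exact hat e.symm
      · exact hbt e.symm
    have harc : ∀ y ∈ ({p (n-2), p (n-3)} : Set V), willowD A2 n p (p (n-1)) y := by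
      intro y hy
      simp only [Set.mem_insert_iff, Set.mem_singleton_iff] at hy
      rcases hy with rfl | rfl
      · exact hDta
      · exact hDtb
    have hT' := rewire_isBranching hT hρS (Or.inl (by right; rfl)) harc
    have hsub : insert (p (n-2)) (insert (p (n-3)) (treeLeaves T Set.univ \ {p (n-1)})) ⊆
        treeLeaves (rewire T {p (n-2), p (n-3)} (p (n-1))) Set.univ := by
      intro v hv
      rw [Set.mem_insert_iff, Set.mem_insert_iff] at hv
      rw [mem_treeLeaves]
      rcases hv with rfl | rfl | hv
      · exact rewire_leaf_new (by left; rfl) hρS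
          (fun w hw => Or.inr (out_a h (hT.sub _ _ hw)))
      · exact rewire_leaf_new (by right; rfl) hρS
          (fun w hw => Or.inl (by rw [out_b h (hT.sub _ _ hw)]; left; rfl))
      · exact rewire_leaf_keep hv.2 (mem_treeLeaves.mp hv.1)
    have hle := hmax (p (n-1)) _ hT'
    have hge := count_two hsub hab a_not_leaf b_not_leaf
    omega
  · -- Case C : root = p i, i + 4 ≤ n
    have base : ∀ i' (T' : V → V → Prop), i' + 4 ≤ n → A2 (p (n-1)) (p i') →
        IsOutBranching (willowD A2 n p) (p i') T' →
        ∃ T'' : V → V → Prop, IsOutBranching (willowD A2 n p) (p (n-1)) T'' ∧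
          (treeLeaves T' Set.univ).ncard + 1 ≤ (treeLeaves T'' Set.univ).ncard := by
      intro i' T' h4 harc2 hT'
      have chain := stem_chain h hT' h4
      have haT : T' (p (n-2)) (p (n-1)) := by
        have := chain (n-2) (by omega) (by omega)
        have e : n - 2 + 1 = n - 1 := by omega
        rwa [e] at this
      have hbT : T' (p (n-3)) (p (n-2)) := by
        have := chain (n-3) (by omega) (by omega)
        have e : n - 3 + 1 = n - 2 := by omega
        rwa [e] at this
      have a_not_leaf : p (n-2) ∉ treeLeaves T' Set.univ :=
        fun hl => (mem_treeLeaves.mp hl) _ haT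
      have b_not_leaf : p (n-3) ∉ treeLeaves T' Set.univ :=
        fun hl => (mem_treeLeaves.mp hl) _ hbT
      have hit : p i' ≠ p (n-1) := fun e => by have := pinj h (by omega) (by omega) e; omega
      have hρS : p (n-1) ∉ ({p (n-2), p (n-3), p i'} : Set V) := by
        intro hy
        simp only [Set.mem_insert_iff, Set.mem_singleton_iff] at hy
        rcases hy with e | e | e
        · exact hat e.symm
        · exact hbt e.symm
        · exact hit e.symm
      have harc : ∀ y ∈ ({p (n-2), p (n-3), p i'} : Set V), willowD A2 n p (p (n-1)) y := by
        intro y hy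
        simp only [Set.mem_insert_iff, Set.mem_singleton_iff] at hy
        rcases hy with rfl | rfl | rfl
        · exact hDta
        · exact hDtb
        · exact Or.inr harc2
      have hT'' := rewire_isBranching hT' hρS (Or.inl (by right; right; rfl)) harc
      have hsub : insert (p (n-2)) (insert (p (n-3)) (treeLeaves T' Set.univ \ {p (n-1)})) ⊆
          treeLeaves (rewire T' {p (n-2), p (n-3), p i'} (p (n-1))) Set.univ := by
        intro v hv
        rw [Set.mem_insert_iff, Set.mem_insert_iff] at hv
        rw [mem_treeLeaves]
        rcases hv with rfl | rfl | hv
        · exact rewire_leaf_new (by left; rfl) hρS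
            (fun w hw => Or.inr (out_a h (hT'.sub _ _ hw)))
        · exact rewire_leaf_new (by right; left; rfl) hρS
            (fun w hw => Or.inl (by rw [out_b h (hT'.sub _ _ hw)]; left; rfl))
        · exact rewire_leaf_keep hv.2 (mem_treeLeaves.mp hv.1)
      exact ⟨_, hT'', count_two hsub hab a_not_leaf b_not_leaf⟩
    have main : ∀ d i' (T' : V → V → Prop), i' + 4 ≤ n → n ≤ i' + 4 + d →
        IsOutBranching (willowD A2 n p) (p i') T' →
        ∃ T'' : V → V → Prop, IsOutBranching (willowD A2 n p) (p (n-1)) T'' ∧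
          (treeLeaves T' Set.univ).ncard + 1 ≤ (treeLeaves T'' Set.univ).ncard := by
      intro d
      induction d with
      | zero =>
        intro i' T' h4 h4' hT'
        obtain ⟨k, hk1, hk2, hk3, hk4, hk5⟩ := a2_in_exists h (j := i') (by omega)
        have hkn : k = n-1 := by omega
        exact base i' T' h4 (hkn ▸ hk5) hT'
      | succ d ihd =>
        intro i' T' h4 h4' hT'
        obtain ⟨k, hk1, hk2, hk3, hk4, hk5⟩ := a2_in_exists h (j := i') (by omega)
        by_cases hkn : k = n-1
        · exact base i' T' h4 (hkn ▸ hk5) hT'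
        · have hk4n : k + 4 ≤ n := by omega
          have hki : p k ≠ p i' := fun e => by
            have := pinj h (by omega) (by omega) e; omega
          have hT2 := rewire_isBranching hT' (S := {p i'}) (ρ := p k)
            (by rw [Set.mem_singleton_iff]; exact hki)
            (Or.inl rfl)
            (by intro y hy; rw [Set.mem_singleton_iff] at hy; exact hy ▸ Or.inr hk5)
          have hkarc : T' (p k) (p (k+1)) := stem_chain h hT' h4 k (by omega) (by omega)
          have hsub2 : treeLeaves T' Set.univ ⊆
              treeLeaves (rewire T' {p i'} (p k)) Set.univ := by
            intro v hv
            rw [mem_treeLeaves]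
            have hvk : v ≠ p k := fun e => (mem_treeLeaves.mp hv) _ (e ▸ hkarc)
            exact rewire_leaf_keep hvk (mem_treeLeaves.mp hv)
          obtain ⟨T'', hT'', hc2⟩ := ihd k _ hk4n (by omega) hT2
          have hmono := Set.ncard_le_ncard hsub2 (Set.toFinite _)
          exact ⟨T'', hT'', by omega⟩
    obtain ⟨T'', hT'', hcount⟩ := main n i T hc (by omega) hT
    have hle := hmax (p (n-1)) T'' hT''
    omega
end

section
/- Let U be a universe of n elements and F = {S_1,...,S_m} a family of sets covering U, with b <= m - 2. Construct the digraph D with vertices {r, s_1,...,s_m, e_1,...,e_n, p, p'}, arcs from r to each s_i, from s_i to e_j whenever e_j ∈ S_i, arcs (r,p), (r,p'), and stem arcs (e_{i+1}, e_i) for 1 <= i < n, (s_{i+1}, s_i) for 1 <= i < m, (e_1, s_m), (s_1, p), (p, p'), (p', r). Then U has a set cover of size at most b from F if and only if D has an out-branching with at least n + m + 2 - b leaves. -/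
universe u

variable {V : Type u}

namespace SCAux
variable {m n : ℕ}

def toSum : SCVert m n → (Unit ⊕ Unit ⊕ Unit ⊕ Fin m ⊕ Fin n)
  | .root => .inl ()
  | .pv => .inr (.inl ())
  | .pv' => .inr (.inr (.inl ()))
  | .s i => .inr (.inr (.inr (.inl i)))
  | .e j => .inr (.inr (.inr (.inr j)))

def ofSum : (Unit ⊕ Unit ⊕ Unit ⊕ Fin m ⊕ Fin n) → SCVert m n
  | .inl _ => .root
  | .inr (.inl _) => .pv
  | .inr (.inr (.inl _)) => .pv'
  | .inr (.inr (.inr (.inl i))) => .s i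
  | .inr (.inr (.inr (.inr j))) => .e j

def equivSum : SCVert m n ≃ (Unit ⊕ Unit ⊕ Unit ⊕ Fin m ⊕ Fin n) where
  toFun := toSum
  invFun := ofSum
  left_inv v := by cases v <;> rfl
  right_inv x := by rcases x with _ | _ | _ | i | j <;> rfl

noncomputable instance : Fintype (SCVert m n) := Fintype.ofEquiv _ equivSum.symm

lemma card_scvert : Nat.card (SCVert m n) = m + n + 3 := by
  rw [Nat.card_eq_fintype_card, Fintype.card_congr equivSum]
  simp; omega

lemma forward (m n b : ℕ) (Fam : Fin m → Set (Fin n)) (hb : b + 2 ≤ m)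
    (C : Set (Fin m)) (hC : C.ncard ≤ b) (hcov' : ∀ j, ∃ i ∈ C, j ∈ Fam i) :
    ∃ T : SCVert m n → SCVert m n → Prop,
      IsOutBranching (scArcs m n Fam) SCVert.root T ∧
      n + m + 2 - b ≤ (treeLeaves T Set.univ).ncard := by
  classical
  choose f hfC hfFam using hcov'
  set T : SCVert m n → SCVert m n → Prop := fun u v =>
    (u = SCVert.root ∧ (v = SCVert.pv ∨ v = SCVert.pv' ∨ ∃ i, v = SCVert.s i)) ∨
    (∃ j, u = SCVert.s (f j) ∧ v = SCVert.e j) with hTdef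
  refine ⟨T, ⟨?_, fun _ _ _ => trivial, fun _ _ _ => trivial, trivial, ?_, ?_, ?_⟩, ?_⟩
  · rintro u v (⟨rfl, rfl | rfl | ⟨i, rfl⟩⟩ | ⟨j, rfl, rfl⟩) <;>
      simp [scArcs, hfFam]
  · rintro u (⟨rfl, h | h | ⟨i, h⟩⟩ | ⟨j, rfl, h⟩) <;> simp_all
  · rintro v - hv
    cases v with
    | root => exact absurd rfl hv
    | pv => exact ⟨SCVert.root, Or.inl ⟨rfl, Or.inl rfl⟩, by rintro u (⟨rfl, -⟩ | ⟨j, rfl, h⟩) <;> simp_all⟩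
    | pv' => exact ⟨SCVert.root, Or.inl ⟨rfl, Or.inr (Or.inl rfl)⟩, by rintro u (⟨rfl, -⟩ | ⟨j, rfl, h⟩) <;> simp_all⟩
    | s i => exact ⟨SCVert.root, Or.inl ⟨rfl, Or.inr (Or.inr ⟨i, rfl⟩)⟩, by rintro u (⟨rfl, -⟩ | ⟨j, rfl, h⟩) <;> simp_all⟩
    | e j =>
      refine ⟨SCVert.s (f j), Or.inr ⟨j, rfl, rfl⟩, ?_⟩
      rintro u (⟨rfl, h | h | ⟨i, h⟩⟩ | ⟨j', rfl, h⟩) <;> simp_all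
  · rintro v -
    cases v with
    | root => exact Relation.ReflTransGen.refl
    | pv => exact Relation.ReflTransGen.single (Or.inl ⟨rfl, Or.inl rfl⟩)
    | pv' => exact Relation.ReflTransGen.single (Or.inl ⟨rfl, Or.inr (Or.inl rfl)⟩)
    | s i => exact Relation.ReflTransGen.single (Or.inl ⟨rfl, Or.inr (Or.inr ⟨i, rfl⟩)⟩)
    | e j =>
      exact Relation.ReflTransGen.head (Or.inl ⟨rfl, Or.inr (Or.inr ⟨f j, rfl⟩)⟩)
        (Relation.ReflTransGen.single (Or.inr ⟨j, rfl, rfl⟩))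
  · have hcompl : (treeLeaves T Set.univ)ᶜ =
        {v : SCVert m n | ∃ w, T v w} := by
      ext v
      simp [treeLeaves]
    have hsub : {v : SCVert m n | ∃ w, T v w} ⊆
        insert SCVert.root (SCVert.s '' (f '' Set.univ)) := by
      rintro v ⟨w, ⟨rfl, -⟩ | ⟨j, rfl, -⟩⟩
      · exact Set.mem_insert _ _
      · exact Set.mem_insert_of_mem _ ⟨f j, ⟨j, trivial, rfl⟩, rfl⟩
    have h1 : ({v : SCVert m n | ∃ w, T v w}).ncard ≤ b + 1 := by
      have h2 : (SCVert.s '' (f '' Set.univ) : Set (SCVert m n)).ncard ≤ b := by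
        have := Set.ncard_image_of_injective (f '' Set.univ)
          (fun a b h => by injection h : Function.Injective (SCVert.s : Fin m → SCVert m n))
        rw [this]
        exact le_trans (Set.ncard_le_ncard (by rintro i ⟨j, -, rfl⟩; exact hfC j) C.toFinite) hC
      calc ({v : SCVert m n | ∃ w, T v w}).ncard
          ≤ (insert SCVert.root (SCVert.s '' (f '' Set.univ))).ncard :=
            Set.ncard_le_ncard hsub (Set.toFinite _)
        _ ≤ (SCVert.s '' (f '' Set.univ)).ncard + 1 := Set.ncard_insert_le _ _
        _ ≤ b + 1 := by omega
    have htot := Set.ncard_add_ncard_compl (treeLeaves T Set.univ)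
    rw [card_scvert, hcompl] at htot
    omega


lemma backward (m n b : ℕ) (Fam : Fin m → Set (Fin n)) (hb : b + 2 ≤ m)
    (hcov : ∀ j, ∃ i, j ∈ Fam i)
    (r : SCVert m n) (T : SCVert m n → SCVert m n → Prop)
    (hT : IsOutBranching (scArcs m n Fam) r T)
    (hleaf : n + m + 2 - b ≤ (treeLeaves T Set.univ).ncard) :
    ∃ C : Set (Fin m), C.ncard ≤ b ∧ ∀ j, ∃ i ∈ C, j ∈ Fam i := by
  classical
  choose pick hpick using hcov
  set Int : Set (SCVert m n) := {v | ∃ w, T v w} with hIntdef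
  have hcompl : (treeLeaves T Set.univ)ᶜ = Int := by
    ext v; simp [treeLeaves, hIntdef]
  have hInt : Int.ncard ≤ b + 1 := by
    have htot := Set.ncard_add_ncard_compl (treeLeaves T Set.univ)
    rw [card_scvert, hcompl] at htot
    omega
  have hpar : ∀ v : SCVert m n, v ≠ r → ∃ u, T u v :=
    fun v hv => (hT.unique_parent v trivial hv).exists
  have hsc : ∀ u v, T u v → scArcs m n Fam u v := hT.sub
  set A : Set (Fin m) := {i | ∃ j, T (SCVert.s i) (SCVert.e j)} with hAdef
  set B : Set (Fin n) := {j | ∃ k, T (SCVert.e k) (SCVert.e j)} with hBdef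
  set gfun : Fin n → SCVert m n := fun j =>
    if h : ∃ k, T (SCVert.e k) (SCVert.e j) then SCVert.e h.choose else SCVert.root
    with hgdef
  have hg : ∀ j ∈ B, ∃ k : Fin n, gfun j = SCVert.e k ∧ T (SCVert.e k) (SCVert.e j) ∧
      (j : ℕ) + 1 = (k : ℕ) := by
    intro j hj
    refine ⟨hj.choose, by rw [hgdef]; exact dif_pos hj, hj.choose_spec, ?_⟩
    have := hsc _ _ hj.choose_spec
    simpa [scArcs] using this
  have hgInj : Set.InjOn gfun B := by
    intro j1 h1 j2 h2 heq
    obtain ⟨k1, e1, -, v1⟩ := hg j1 h1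
    obtain ⟨k2, e2, -, v2⟩ := hg j2 h2
    rw [e1, e2] at heq
    injection heq with hk
    have hk' : (k1 : ℕ) = (k2 : ℕ) := by rw [hk]
    exact Fin.val_injective (by omega)
  -- the key counting lemma
  have key : ∀ W : Set (SCVert m n), W ⊆ Int →
      (∀ w ∈ W, (∀ i : Fin m, w ≠ SCVert.s i) ∧ (∀ k : Fin n, w ≠ SCVert.e k)) →
      A.ncard + B.ncard + W.ncard ≤ b + 1 := by
    intro W hWInt hWne
    have hsubInt : SCVert.s '' A ∪ gfun '' B ∪ W ⊆ Int := by
      rintro x ((⟨i, hi, rfl⟩ | ⟨j, hj, rfl⟩) | hx)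
      · obtain ⟨j, hji⟩ := hi; exact ⟨SCVert.e j, hji⟩
      · obtain ⟨k, e1, hk, -⟩ := hg j hj; rw [e1]; exact ⟨SCVert.e j, hk⟩
      · exact hWInt hx
    have d1 : Disjoint (SCVert.s '' A) (gfun '' B) := by
      rw [Set.disjoint_left]
      rintro x ⟨i, hi, rfl⟩ ⟨j, hj, hx⟩
      obtain ⟨k, e1, -, -⟩ := hg j hj
      rw [e1] at hx
      cases hx
    have d2 : Disjoint (SCVert.s '' A ∪ gfun '' B) W := by
      rw [Set.disjoint_left]
      rintro x (⟨i, hi, rfl⟩ | ⟨j, hj, rfl⟩) hx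
      · exact (hWne _ hx).1 i rfl
      · obtain ⟨k, e1, -, -⟩ := hg j hj
        exact (hWne _ hx).2 k e1
    have hcalc : (SCVert.s '' A ∪ gfun '' B ∪ W).ncard =
        A.ncard + B.ncard + W.ncard := by
      rw [Set.ncard_union_eq d2, Set.ncard_union_eq d1,
        Set.ncard_image_of_injective A
          (fun a b h => by injection h : Function.Injective (SCVert.s : Fin m → SCVert m n)),
        Set.ncard_image_of_injOn hgInj]
    calc A.ncard + B.ncard + W.ncard = (SCVert.s '' A ∪ gfun '' B ∪ W).ncard := hcalc.symm
      _ ≤ Int.ncard := Set.ncard_le_ncard hsubInt (Set.toFinite _)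
      _ ≤ b + 1 := hInt
  -- covering from parents
  have hcover : ∀ j : Fin n, SCVert.e j ≠ r → (∃ i ∈ A, j ∈ Fam i) ∨ j ∈ B := by
    intro j hj
    obtain ⟨u, hu⟩ := hpar _ hj
    have hsu := hsc _ _ hu
    cases u with
    | root => simp [scArcs] at hsu
    | pv => simp [scArcs] at hsu
    | pv' => simp [scArcs] at hsu
    | s i => exact Or.inl ⟨i, ⟨j, hu⟩, by simpa [scArcs] using hsu⟩
    | e k => exact Or.inr ⟨k, hu⟩
  -- parent of pv'
  have hpv'w : SCVert.pv' ≠ r → ∃ w, T w SCVert.pv' ∧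
      (w = SCVert.root ∨ w = SCVert.pv) := by
    intro h
    obtain ⟨w, hw⟩ := hpar _ h
    have hsw := hsc _ _ hw
    refine ⟨w, hw, ?_⟩
    cases w <;> simp [scArcs] at hsw <;> simp
  by_cases hre : ∃ j0 : Fin n, r = SCVert.e j0
  · obtain ⟨j0, hr⟩ := hre
    -- pv' is internal, being the parent of root
    have hrootne : SCVert.root ≠ r := by rw [hr]; simp
    obtain ⟨u, hu⟩ := hpar _ hrootne
    have hsu := hsc _ _ hu
    have hupv' : u = SCVert.pv' := by cases u <;> simp_all [scArcs]
    subst hupv'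
    have hpv'ne : SCVert.pv' ≠ r := by rw [hr]; simp
    obtain ⟨w, hw, hwor⟩ := hpv'w hpv'ne
    have hwne : w ≠ SCVert.pv' := by rcases hwor with rfl | rfl <;> simp
    have hkey := key {SCVert.pv', w} ?_ ?_
    rotate_left
    · rintro x (rfl | rfl)
      · exact ⟨SCVert.root, hu⟩
      · exact ⟨SCVert.pv', hw⟩
    · rintro x (rfl | rfl)
      · exact ⟨fun i => by simp, fun k => by simp⟩
      · rcases hwor with rfl | rfl
        · exact ⟨fun i => by simp, fun k => by simp⟩
        · exact ⟨fun i => by simp, fun k => by simp⟩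
    have hpairW : ({SCVert.pv', w} : Set (SCVert m n)).ncard = 2 :=
      Set.ncard_pair (Ne.symm hwne)
    rw [hpairW] at hkey
    refine ⟨A ∪ (pick '' B ∪ {pick j0}), ?_, ?_⟩
    · calc (A ∪ (pick '' B ∪ {pick j0})).ncard
          ≤ A.ncard + (pick '' B ∪ {pick j0}).ncard := Set.ncard_union_le _ _
        _ ≤ A.ncard + ((pick '' B).ncard + ({pick j0} : Set (Fin m)).ncard) := by
            have := Set.ncard_union_le (pick '' B) ({pick j0} : Set (Fin m))
            omega
        _ ≤ A.ncard + (B.ncard + 1) := by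
            have h1 := Set.ncard_image_le (f := pick) (s := B) (Set.toFinite _)
            have h2 : ({pick j0} : Set (Fin m)).ncard = 1 := Set.ncard_singleton _
            omega
        _ ≤ b := by omega
    · intro j
      by_cases hj : SCVert.e j = r
      · rw [hr] at hj
        injection hj with hjj
        subst hjj
        exact ⟨pick j, Or.inr (Or.inr rfl), hpick j⟩
      · rcases hcover j hj with ⟨i, hiA, hiFam⟩ | hjB
        · exact ⟨i, Or.inl hiA, hiFam⟩
        · exact ⟨pick j, Or.inr (Or.inl ⟨j, hjB, rfl⟩), hpick j⟩
  · push_neg at hre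
    have hW : ∃ w : SCVert m n, (∃ x, T w x) ∧
        (∀ i : Fin m, w ≠ SCVert.s i) ∧ (∀ k : Fin n, w ≠ SCVert.e k) := by
      by_cases hpr : SCVert.pv' = r
      · refine ⟨SCVert.pv', ?_, fun i => by simp, fun k => by simp⟩
        have hpvne : SCVert.pv ≠ r := by rw [← hpr]; simp
        rcases (hT.reach SCVert.pv trivial).cases_head with heq | ⟨c, hc, -⟩
        · exact absurd heq.symm hpvne
        · rw [hpr]; exact ⟨c, hc⟩
      · obtain ⟨w, hw, hwor⟩ := hpv'w hpr
        refine ⟨w, ⟨SCVert.pv', hw⟩, ?_, ?_⟩ <;>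
          rcases hwor with rfl | rfl <;> intro x <;> simp
    obtain ⟨w, hwInt, hws, hwe⟩ := hW
    have hkey := key {w} (by rintro x rfl; exact hwInt)
      (by rintro x rfl; exact ⟨hws, hwe⟩)
    rw [Set.ncard_singleton] at hkey
    refine ⟨A ∪ pick '' B, ?_, ?_⟩
    · calc (A ∪ pick '' B).ncard ≤ A.ncard + (pick '' B).ncard := Set.ncard_union_le _ _
        _ ≤ A.ncard + B.ncard := by
            have := Set.ncard_image_le (f := pick) (s := B) (Set.toFinite _)
            omega
        _ ≤ b := by omega
    · intro j
      rcases hcover j (Ne.symm (hre j)) with ⟨i, hiA, hiFam⟩ | hjB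
      · exact ⟨i, Or.inl hiA, hiFam⟩
      · exact ⟨pick j, Or.inr ⟨j, hjB, rfl⟩, hpick j⟩
end SCAux
theorem stmt17 (m n b : ℕ) (hn : 0 < n) (Fam : Fin m → Set (Fin n))
    (hcov : ∀ j, ∃ i, j ∈ Fam i) (hb : b + 2 ≤ m) :
    (∃ C : Set (Fin m), C.ncard ≤ b ∧ ∀ j, ∃ i ∈ C, j ∈ Fam i) ↔
    (∃ (root : SCVert m n) (T : SCVert m n → SCVert m n → Prop),
      IsOutBranching (scArcs m n Fam) root T ∧
      n + m + 2 - b ≤ (treeLeaves T Set.univ).ncard) := by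
  constructor
  · rintro ⟨C, hC, hcov'⟩
    obtain ⟨T, hT, hL⟩ := SCAux.forward m n b Fam hb C hC hcov'
    exact ⟨SCVert.root, T, hT, hL⟩
  · rintro ⟨r, T, hT, hL⟩
    exact SCAux.backward m n b Fam hb hcov r T hT hL
end
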